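/- Let G₁ be a regular simple graph of order n > 3, let e₁ be an edge of G₁, and let G₂ be a simple graph of order n and size m₂ whose complement is isomorphic to G₁ - e₁. Then m₂·M1(G₂) < n·M2(G₂). -/

import Mathlib

/-- Degree of a vertex (classical, so it works for any graph on a finite vertex type). -/
noncomputable def gdeg {V : Type*} [Fintype V] (G : SimpleGraph V) (v : V) : ℕ := by
  classical exact G.degree v

/-- First Zagreb index: sum of squares of the vertex degrees. -/
noncomputable def zagrebM1 {V : Type*} [Fintype V] (G : SimpleGraph V) : ℕ :=
  ∑ v, gdeg G v ^ 2

/-- Second Zagreb index: sum of d(u)·d(v) over the edges uv. -/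
noncomputable def zagrebM2 {V : Type*} [Fintype V] (G : SimpleGraph V) : ℕ := by
  classical exact
    ∑ e ∈ G.edgeFinset,
      Sym2.lift ⟨fun u v => gdeg G u * gdeg G v, fun u v => by simp [Nat.mul_comm]⟩ e

/-- The size (number of edges) of a graph. -/
noncomputable def gsize {V : Type*} [Fintype V] (G : SimpleGraph V) : ℕ := by
  classical exact G.edgeFinset.card

/-- A graph is `r`-regular if every vertex has degree `r`. -/
def gregOfDeg {V : Type*} [Fintype V] (G : SimpleGraph V) (r : ℕ) : Prop :=
  ∀ v, gdeg G v = r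

/-- A graph is regular if all its vertices have the same degree. -/
def gregular {V : Type*} [Fintype V] (G : SimpleGraph V) : Prop :=
  ∃ r, gregOfDeg G r

open Finset

lemma gdeg_eq {V : Type*} [Fintype V] (G : SimpleGraph V) (v : V) [Fintype (G.neighborSet v)] :
    gdeg G v = G.degree v := by
  unfold gdeg
  rw [← SimpleGraph.card_neighborSet_eq_degree, ← SimpleGraph.card_neighborSet_eq_degree]
  congr 1
  exact Subsingleton.elim _ _

lemma gsize_eq {V : Type*} [Fintype V] (G : SimpleGraph V) [Fintype G.edgeSet] :
    gsize G = G.edgeFinset.card := by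
  unfold gsize
  congr 1
  ext e
  simp [SimpleGraph.mem_edgeFinset]

lemma zagrebM2_eq {V : Type*} [Fintype V] (G : SimpleGraph V) [Fintype G.edgeSet] :
    zagrebM2 G = ∑ e ∈ G.edgeFinset,
      Sym2.lift ⟨fun u v => gdeg G u * gdeg G v, fun u v => by simp [Nat.mul_comm]⟩ e := by
  unfold zagrebM2
  apply Finset.sum_congr _ (fun _ _ => rfl)
  ext e
  simp [SimpleGraph.mem_edgeFinset]

lemma deg_eq_sum_ite {V : Type*} [Fintype V] [DecidableEq V] (G : SimpleGraph V)
    [DecidableRel G.Adj] (u : V) :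
    G.degree u = ∑ v, if G.Adj u v then 1 else 0 := by
  rw [← SimpleGraph.card_neighborFinset_eq_degree, SimpleGraph.neighborFinset_eq_filter,
    Finset.card_filter]

lemma two_mul_zagrebM2 {V : Type*} [Fintype V] [DecidableEq V] (G : SimpleGraph V)
    [DecidableRel G.Adj] :
    2 * zagrebM2 G = ∑ u, ∑ v, if G.Adj u v then gdeg G u * gdeg G v else 0 := by
  classical
  rw [zagrebM2_eq]
  set f : Sym2 V → ℕ :=
    Sym2.lift ⟨fun u v => gdeg G u * gdeg G v, fun u v => by simp [Nat.mul_comm]⟩ with hf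
  set P : Finset (V × V) := Finset.univ.filter (fun p : V × V => G.Adj p.1 p.2) with hP
  have h1 : ∑ u, ∑ v, (if G.Adj u v then gdeg G u * gdeg G v else 0)
      = ∑ p ∈ P, f (Sym2.mk.uncurry p) := by
    rw [hP, Finset.sum_filter, ← Finset.sum_product']
    apply Finset.sum_congr rfl
    rintro ⟨u, v⟩ _
    simp [hf]
  have h2 := Finset.sum_comp (s := P) f Sym2.mk.uncurry
  have himg : P.image Sym2.mk.uncurry = G.edgeFinset := by
    ext e
    induction e using Sym2.ind with
    | _ x y =>
      simp only [Finset.mem_image, SimpleGraph.mem_edgeFinset, SimpleGraph.mem_edgeSet, hP,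
        Finset.mem_filter, Finset.mem_univ, true_and]
      constructor
      · rintro ⟨p, hp, he⟩
        rcases (Sym2.mk_eq_mk_iff (p := p) (q := (x, y))).1 he with rfl | rfl
        · exact hp
        · exact hp.symm
      · intro h
        exact ⟨(x, y), h, rfl⟩
  rw [h1, h2, himg, Finset.mul_sum]
  apply Finset.sum_congr rfl
  intro e he
  induction e using Sym2.ind with
  | _ x y =>
    have hadj : G.Adj x y := by simpa using he
    have hfiber : P.filter (fun p => Sym2.mk.uncurry p = s(x, y)) = {(x, y), (y, x)} := by
      ext ⟨p1, p2⟩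
      simp only [Finset.mem_filter, hP, Finset.mem_univ, true_and, Finset.mem_insert,
        Finset.mem_singleton, Function.uncurry_apply_pair, Sym2.eq_iff, Prod.mk.injEq]
      constructor
      · rintro ⟨_, h | h⟩
        · left; exact h
        · right; exact h
      · rintro (⟨rfl, rfl⟩ | ⟨rfl, rfl⟩)
        · exact ⟨hadj, Or.inl ⟨rfl, rfl⟩⟩
        · exact ⟨hadj.symm, Or.inr ⟨rfl, rfl⟩⟩
    rw [hfiber]
    have hne : (x, y) ≠ (y, x) := by
      intro h
      exact hadj.ne (congrArg Prod.fst h)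
    rw [Finset.card_insert_of_notMem (by simpa using hne), Finset.card_singleton]
    simp [smul_eq_mul]

/-- Degree after deleting one edge. -/
lemma deg_deleteEdge {V : Type*} [Fintype V] [DecidableEq V] (G : SimpleGraph V)
    [DecidableRel G.Adj] {x y : V} (hxy : G.Adj x y) (w : V)
    [Fintype ((G.deleteEdges {s(x, y)}).neighborSet w)] :
    (G.deleteEdges {s(x, y)}).degree w + (if w = x ∨ w = y then 1 else 0) = G.degree w := by
  have hne : x ≠ y := hxy.ne
  rcases em (w = x ∨ w = y) with hw | hw
  · rcases hw with rfl | rfl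
    · have hN : (G.deleteEdges {s(w, y)}).neighborFinset w = (G.neighborFinset w).erase y := by
        ext u
        simp only [SimpleGraph.mem_neighborFinset, SimpleGraph.deleteEdges_adj,
          Set.mem_singleton_iff, Finset.mem_erase, Sym2.eq_iff]
        constructor
        · rintro ⟨h1, h2⟩
          exact ⟨fun h => h2 (Or.inl ⟨trivial, h⟩), h1⟩
        · rintro ⟨h1, h2⟩
          refine ⟨h2, ?_⟩
          rintro (⟨_, h⟩ | ⟨h, _⟩)
          · exact h1 h
          · exact hne h
      rw [← SimpleGraph.card_neighborFinset_eq_degree, hN,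
        Finset.card_erase_of_mem (by simpa [SimpleGraph.mem_neighborFinset] using hxy),
        SimpleGraph.card_neighborFinset_eq_degree, if_pos (Or.inl rfl)]
      have h1 : 1 ≤ G.degree w := (G.degree_pos_iff_exists_adj w).2 ⟨y, hxy⟩
      omega
    · have hN : (G.deleteEdges {s(x, w)}).neighborFinset w = (G.neighborFinset w).erase x := by
        ext u
        simp only [SimpleGraph.mem_neighborFinset, SimpleGraph.deleteEdges_adj,
          Set.mem_singleton_iff, Finset.mem_erase, Sym2.eq_iff]
        constructor
        · rintro ⟨h1, h2⟩
          exact ⟨fun h => h2 (Or.inr ⟨trivial, h⟩), h1⟩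
        · rintro ⟨h1, h2⟩
          refine ⟨h2, ?_⟩
          rintro (⟨h, _⟩ | ⟨_, h⟩)
          · exact hne h.symm
          · exact h1 h
      rw [← SimpleGraph.card_neighborFinset_eq_degree, hN,
        Finset.card_erase_of_mem (by simpa [SimpleGraph.mem_neighborFinset] using hxy.symm),
        SimpleGraph.card_neighborFinset_eq_degree, if_pos (Or.inr rfl)]
      have h1 : 1 ≤ G.degree w := (G.degree_pos_iff_exists_adj w).2 ⟨x, hxy.symm⟩
      omega
  · push_neg at hw
    have hN : (G.deleteEdges {s(x, y)}).neighborFinset w = G.neighborFinset w := by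
      ext u
      simp only [SimpleGraph.mem_neighborFinset, SimpleGraph.deleteEdges_adj,
        Set.mem_singleton_iff, Sym2.eq_iff]
      constructor
      · exact fun h => h.1
      · intro h
        refine ⟨h, ?_⟩
        rintro (⟨h1, _⟩ | ⟨h1, _⟩)
        · exact hw.1 h1
        · exact hw.2 h1
    rw [← SimpleGraph.card_neighborFinset_eq_degree, hN,
      SimpleGraph.card_neighborFinset_eq_degree]
    simp [hw.1, hw.2]

/-- Let `G₁` be a regular graph of order `n > 3`, let `e₁` be an edge
of `G₁`, and let `G₂` be a graph of order `n` and size `m₂` whose complement is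
isomorphic to `G₁ - e₁`. Then `m₂·M1(G₂) < n·M2(G₂)`. -/
theorem stmt_18 {V : Type*} [Fintype V] (G₁ G₂ : SimpleGraph V) (n m₂ : ℕ)
    (hn : n = Fintype.card V) (hn3 : 3 < n) (hreg : gregular G₁)
    (e₁ : Sym2 V) (he : e₁ ∈ G₁.edgeSet)
    (hm : m₂ = gsize G₂)
    (hiso : Nonempty (G₂ᶜ ≃g G₁.deleteEdges {e₁})) :
    m₂ * zagrebM1 G₂ < n * zagrebM2 G₂ := by
  classical
  obtain ⟨r, hr⟩ := hreg
  obtain ⟨φ⟩ := hiso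
  induction e₁ using Sym2.ind with
  | _ a' b' =>
  rw [SimpleGraph.mem_edgeSet] at he
  have hne' : a' ≠ b' := he.ne
  obtain ⟨a, hfa⟩ : ∃ a, φ a = a' := ⟨φ.symm a', φ.apply_symm_apply a'⟩
  obtain ⟨b, hfb⟩ : ∃ b, φ b = b' := ⟨φ.symm b', φ.apply_symm_apply b'⟩
  have hinj : Function.Injective φ := φ.toEquiv.injective
  have hne : a ≠ b := fun h => hne' ((hfa.symm.trans (congrArg φ h)).trans hfb)
  have hr_lt : r < n := by
    rw [hn, ← hr a', gdeg_eq]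
    exact G₁.degree_lt_card_verts a'
  have hr_pos : 1 ≤ r := by
    rw [← hr a', gdeg_eq]
    exact (G₁.degree_pos_iff_exists_adj a').2 ⟨b', he⟩
  obtain ⟨s, hs⟩ : ∃ s, s = n - 1 - r := ⟨_, rfl⟩
  have hdel : ∀ w : V, (G₁.deleteEdges {s(a', b')}).degree w
      + (if w = a' ∨ w = b' then 1 else 0) = r := by
    intro w
    rw [deg_deleteEdge G₁ he w, ← gdeg_eq, hr]
  have hcompl : ∀ v : V, G₂ᶜ.degree v = (G₁.deleteEdges {s(a', b')}).degree (φ v) := by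
    intro v
    rw [← SimpleGraph.card_neighborSet_eq_degree, ← SimpleGraph.card_neighborSet_eq_degree]
    exact Fintype.card_congr (φ.mapNeighborSet v)
  have hd : ∀ v : V, gdeg G₂ v = s + (if v = a ∨ v = b then 1 else 0) := by
    intro v
    have h1 : G₂ᶜ.degree v = Fintype.card V - 1 - G₂.degree v := SimpleGraph.degree_compl _ _
    have h2 : G₂.degree v < Fintype.card V := G₂.degree_lt_card_verts v
    have h3 := hdel (φ v)
    have h4 : (φ v = a' ∨ φ v = b') ↔ (v = a ∨ v = b) := by
      constructor
      · rintro (h | h)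
        · exact Or.inl (hinj (h.trans hfa.symm))
        · exact Or.inr (hinj (h.trans hfb.symm))
      · rintro (rfl | rfl)
        · exact Or.inl hfa
        · exact Or.inr hfb
    rw [← hcompl, h1] at h3
    rw [gdeg_eq, hs, hn]
    by_cases hv : v = a ∨ v = b
    · rw [if_pos (h4.2 hv)] at h3
      rw [if_pos hv]
      omega
    · rw [if_neg (fun h => hv (h4.1 h))] at h3
      rw [if_neg hv]
      omega
  have hadj : G₂.Adj a b := by
    by_contra hc
    have h0 : G₂ᶜ.Adj a b := ⟨hne, hc⟩
    have h1 := φ.map_adj_iff.2 h0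
    rw [hfa, hfb] at h1
    rcases h1 with ⟨_, h2⟩
    exact h2 (by simp [hne'])
  set χ : V → ℕ := fun v => if v = a ∨ v = b then 1 else 0 with hχ
  have hχa : χ a = 1 := by simp [hχ]
  have hχb : χ b = 1 := by simp [hχ]
  have hχ01 : ∀ v, χ v = 0 ∨ χ v = 1 := by
    intro v
    by_cases h : v = a ∨ v = b <;> simp [hχ, h]
  have hχsplit : ∀ v, χ v = (if v = a then 1 else 0) + (if v = b then 1 else 0) := by
    intro v
    by_cases h1 : v = a
    · subst h1; simp [hχ, hne]
    · by_cases h2 : v = b <;> simp [hχ, h1, h2, Ne.symm hne]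
  have hχsum : ∑ v, χ v = 2 := by
    rw [Finset.sum_congr rfl (fun v _ => hχsplit v), Finset.sum_add_distrib]
    simp
  have hdegsum : ∑ v, gdeg G₂ v = n * s + 2 := by
    rw [Finset.sum_congr rfl (fun v _ => hd v), Finset.sum_add_distrib]
    rw [Finset.sum_const, hχsum]
    simp [hn, mul_comm]
  have hm2 : 2 * m₂ = n * s + 2 := by
    rw [hm, gsize_eq, ← SimpleGraph.sum_degrees_eq_twice_card_edges, ← hdegsum]
    exact (Finset.sum_congr rfl (fun v _ => (gdeg_eq G₂ v))).symm
  have hM1 : zagrebM1 G₂ = n * s ^ 2 + 4 * s + 2 := by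
    unfold zagrebM1
    rw [Finset.sum_congr rfl (fun v _ => by rw [hd v])]
    have hsq : ∀ v : V, (s + χ v) ^ 2 = s ^ 2 + 2 * s * χ v + χ v := by
      intro v
      rcases hχ01 v with h | h <;> rw [h] <;> ring
    rw [Finset.sum_congr rfl (fun v _ => hsq v)]
    rw [Finset.sum_add_distrib, Finset.sum_add_distrib, ← Finset.mul_sum, hχsum,
      Finset.sum_const]
    simp [hn]
    ring
  have hdegsum' : ∀ u : V, ∑ v, (if G₂.Adj u v then 1 else 0) = gdeg G₂ u := by
    intro u
    rw [gdeg_eq, deg_eq_sum_ite]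
  have hM2 : 2 * zagrebM2 G₂ = (n * s + 2) * s ^ 2 + 4 * s * (s + 1) + 2 := by
    rw [two_mul_zagrebM2]
    have hterm : ∀ u v : V, (if G₂.Adj u v then gdeg G₂ u * gdeg G₂ v else 0)
        = s * s * (if G₂.Adj u v then 1 else 0)
          + s * (χ v * (if G₂.Adj u v then 1 else 0))
          + s * (χ u * (if G₂.Adj u v then 1 else 0))
          + χ u * (χ v * (if G₂.Adj u v then 1 else 0)) := by
      intro u v
      by_cases h : G₂.Adj u v
      · rw [if_pos h, if_pos h, hd u, hd v]
        show (s + χ u) * (s + χ v) = _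
        ring
      · simp [h]
    simp only [hterm]
    simp only [Finset.sum_add_distrib]
    have hA : ∑ u, ∑ v, s * s * (if G₂.Adj u v then 1 else 0) = s * s * (n * s + 2) := by
      simp only [← Finset.mul_sum]
      rw [Finset.sum_congr rfl (fun u _ => by rw [hdegsum' u]), hdegsum]
    have hC : ∑ u, ∑ v, s * (χ u * (if G₂.Adj u v then 1 else 0)) = s * (2 * (s + 1)) := by
      simp only [← Finset.mul_sum]
      congr 1
      rw [Finset.sum_congr rfl (fun u _ => by rw [hdegsum' u])]
      have hsp : ∀ u, χ u * gdeg G₂ u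
          = (if u = a then (s + 1) else 0) + (if u = b then (s + 1) else 0) := by
        intro u
        by_cases h1 : u = a
        · subst h1; rw [hχa, hd]; simp [hne]
        · by_cases h2 : u = b
          · subst h2; rw [hχb, hd]; simp [h1]
          · simp [hχ, h1, h2]
      rw [Finset.sum_congr rfl (fun u _ => hsp u), Finset.sum_add_distrib]
      simp
      ring
    have hB : ∑ u, ∑ v, s * (χ v * (if G₂.Adj u v then 1 else 0)) = s * (2 * (s + 1)) := by
      rw [Finset.sum_comm]
      have hsym : ∀ v u : V, s * (χ v * (if G₂.Adj u v then 1 else 0))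
          = s * (χ v * (if G₂.Adj v u then 1 else 0)) := by
        intro v u
        by_cases h : G₂.Adj u v
        · rw [if_pos h, if_pos h.symm]
        · rw [if_neg h, if_neg (fun hh => h hh.symm)]
      rw [Finset.sum_congr rfl (fun v _ => Finset.sum_congr rfl (fun u _ => hsym v u))]
      exact hC
    have hD : ∑ u, ∑ v, χ u * (χ v * (if G₂.Adj u v then 1 else 0)) = 2 := by
      have hin : ∀ u, ∑ v, χ v * (if G₂.Adj u v then 1 else 0)
          = (if G₂.Adj u a then 1 else 0) + (if G₂.Adj u b then 1 else 0) := by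
        intro u
        have hsp : ∀ v, χ v * (if G₂.Adj u v then 1 else 0)
            = (if v = a then (if G₂.Adj u a then 1 else 0) else 0)
              + (if v = b then (if G₂.Adj u b then 1 else 0) else 0) := by
          intro v
          by_cases h1 : v = a
          · subst h1; simp [hχ, hne]
          · by_cases h2 : v = b
            · subst h2; simp [hχ, h1]
            · simp [hχ, h1, h2]
        rw [Finset.sum_congr rfl (fun v _ => hsp v), Finset.sum_add_distrib]
        simp
      have hout : ∀ u, χ u * ((if G₂.Adj u a then 1 else 0) + (if G₂.Adj u b then 1 else 0))
          = (if u = a then (if G₂.Adj a b then 1 else 0) else 0)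
            + (if u = b then (if G₂.Adj b a then 1 else 0) else 0) := by
        intro u
        by_cases h1 : u = a
        · subst h1; simp [hχ, hne, G₂.irrefl]
        · by_cases h2 : u = b
          · subst h2
            simp [hχ, h1, Ne.symm hne, G₂.irrefl]
          · simp [hχ, h1, h2]
      calc ∑ u, ∑ v, χ u * (χ v * (if G₂.Adj u v then 1 else 0))
          = ∑ u, χ u * ((if G₂.Adj u a then 1 else 0) + (if G₂.Adj u b then 1 else 0)) := by
            apply Finset.sum_congr rfl
            intro u _
            rw [← hin u, Finset.mul_sum]
        _ = 2 := by
            rw [Finset.sum_congr rfl (fun u _ => hout u), Finset.sum_add_distrib]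
            simp [hadj, hadj.symm]
    rw [hA, hB, hC, hD]
    ring
  have key : 4 * (m₂ * zagrebM1 G₂) < 4 * (n * zagrebM2 G₂) := by
    have e1 : 4 * (m₂ * zagrebM1 G₂) = (2 * m₂) * (2 * zagrebM1 G₂) := by ring
    have e2 : 4 * (n * zagrebM2 G₂) = 2 * n * (2 * zagrebM2 G₂) := by ring
    rw [e1, e2, hm2, hM1, hM2]
    nlinarith [hn3]
  omega
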